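/- Let q ≥ 5 be an odd prime power. For every polynomial g ∈ F_q[x] of degree exactly q−2, there exist a monic irreducible quadratic polynomial p(x) ∈ F_q[x], a pair (a,b) ∈ F_q²∖{(0,0)}, and a polynomial h ∈ F_q[x] of degree at most q−4 such that g(x) = (a+bx)/p(x) + h(x) for all x ∈ F_q. -/

import Mathlib

open Polynomial

/-- For odd `q ≥ 5`, every polynomial `g` of degree exactly `q - 2` agrees on all of
`F_q` with `(a+bx)/p(x) + h(x)` for some monic irreducible quadratic `p`, some
nonzero pair `(a,b)`, and some `h` of degree at most `q - 4`. -/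
theorem stmt6 {F : Type*} [Field F] [Fintype F] [DecidableEq F]
    (hq : 5 ≤ Fintype.card F) (hodd : Odd (Fintype.card F))
    (g : F[X]) (hg : g.degree = ((Fintype.card F - 2 : ℕ) : WithBot ℕ)) :
    ∃ p : F[X], p.Monic ∧ Irreducible p ∧ p.natDegree = 2 ∧
      ∃ a b : F, (a, b) ≠ (0, 0) ∧
        ∃ h : F[X], h.degree ≤ ((Fintype.card F - 4 : ℕ) : WithBot ℕ) ∧
          ∀ x : F, g.eval x = (a + b * x) / p.eval x + h.eval x := by
  classical
  set q := Fintype.card F with hqdef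
  obtain ⟨m, hm⟩ : ∃ m, q = m + 4 := ⟨q - 4, by omega⟩
  -- characteristic facts
  have hchar2 : ringChar F ≠ 2 := by
    intro h
    have h2 := (FiniteField.even_card_iff_char_two (F := F)).mp h
    rcases hodd with ⟨k, hk⟩
    omega
  have h2 : (2 : F) ≠ 0 := Ring.two_ne_zero hchar2
  have h4 : (4 : F) ≠ 0 := by
    intro h; apply h2
    have h' : (4 : F) = 2 * 2 := by norm_num
    rcases mul_eq_zero.mp (h' ▸ h) with h' | h' <;> exact h'
  -- leading coefficient of g
  have hgne : g ≠ 0 := fun h => by simp [h] at hg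
  have hgnat : g.natDegree = q - 2 := natDegree_eq_of_degree_eq_some hg
  set β : F := g.coeff (q - 2) with hβdef
  have hβ : β ≠ 0 := by
    have h' := leadingCoeff_ne_zero.mpr hgne
    rwa [leadingCoeff, hgnat] at h'
  set c : F := -(g.coeff (q - 3)) / β with hcdef
  obtain ⟨u, hu⟩ := FiniteField.exists_nonsquare hchar2
  set d : F := (c ^ 2 - u) / 4 with hddef
  have hdisc : discrim 1 c d = u := by
    rw [discrim, hddef]; field_simp; ring
  have hnosq : ∀ s : F, discrim 1 c d ≠ s ^ 2 := by
    intro s hs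
    rw [hdisc] at hs
    exact hu ⟨s, by rw [hs]; ring⟩
  set p : F[X] := X ^ 2 + C c * X + C d with hpdef
  have hpeval : ∀ x : F, p.eval x = x ^ 2 + c * x + d := by
    intro x; simp [hpdef]
  have hpne : ∀ x : F, p.eval x ≠ 0 := by
    intro x
    have h' := quadratic_ne_zero_of_discrim_ne_sq hnosq x
    rw [hpeval x]; intro h; apply h'; rw [← h]; ring
  have hpmonic : p.Monic := by unfold p; monicity!
  have hpnat : p.natDegree = 2 := by unfold p; compute_degree!
  have hirr : Irreducible p := by
    rw [irreducible_iff_roots_eq_zero_of_degree_le_three (by omega) (by omega)]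
    refine Multiset.eq_zero_of_forall_notMem fun x hx => ?_
    exact hpne x ((mem_roots hpmonic.ne_zero).mp hx)
  -- work in K = AdjoinRoot p
  haveI : Fact (Irreducible p) := ⟨hirr⟩
  set K := AdjoinRoot p with hK
  set φ : F →+* K := AdjoinRoot.of p with hφ
  set ξ : K := AdjoinRoot.root p with hξdef
  have halg : algebraMap F K = φ := rfl
  have hξ : ξ ^ 2 + φ c * ξ + φ d = 0 := by
    have h0 : AdjoinRoot.mk p (X ^ 2 + C c * X + C d) = 0 := by
      rw [← hpdef]; exact AdjoinRoot.mk_self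
    simpa [map_add, map_mul, map_pow, AdjoinRoot.mk_X, AdjoinRoot.mk_C] using h0
  have haev : ∀ y : K, (aeval y) p = y ^ 2 + φ c * y + φ d := by
    intro y; simp [hpdef, halg]
  have hfrob : (aeval (ξ ^ q)) p = 0 := by
    rw [← expand_aeval, FiniteField.expand_card, map_pow, AdjoinRoot.aeval_eq,
      AdjoinRoot.mk_self, zero_pow (by omega)]
  have hfac : (ξ ^ q - ξ) * (ξ ^ q - (-(φ c) - ξ)) = 0 := by
    rw [haev] at hfrob
    linear_combination hfrob - hξ
  have hnotfix : ξ ^ q ≠ ξ := by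
    intro hfix
    set f : K[X] := X ^ q - X with hfdef
    have hfnat : f.natDegree = q := FiniteField.X_pow_card_sub_X_natDegree_eq K (by omega)
    have hfne : f ≠ 0 := FiniteField.X_pow_card_sub_X_ne_zero K (by omega)
    have hsub : insert ξ (Finset.univ.image φ) ⊆ f.roots.toFinset := by
      intro y hy
      rw [Multiset.mem_toFinset, mem_roots hfne]
      rcases Finset.mem_insert.mp hy with rfl | hy
      · simp [hfdef, IsRoot, hfix]
      · obtain ⟨t, -, ht⟩ := Finset.mem_image.mp hy
        rw [← ht]
        simp only [hfdef, IsRoot, eval_sub, eval_pow, eval_X, ← map_pow]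
        rw [show t ^ q = t from FiniteField.pow_card t, sub_self]
    by_cases hmem : ξ ∈ Finset.univ.image φ
    · obtain ⟨t, -, ht⟩ := Finset.mem_image.mp hmem
      apply hpne t
      have h0 : (aeval ξ) p = 0 := by
        rw [hξdef, AdjoinRoot.aeval_eq]; exact AdjoinRoot.mk_self
      rw [← ht, hφ, ← AdjoinRoot.algebraMap_eq,
        aeval_algebraMap_apply_eq_algebraMap_eval] at h0
      exact (algebraMap F K).injective (by rwa [map_zero])
    · have hcard : q + 1 ≤ f.roots.toFinset.card := by
        have h1 : (insert ξ (Finset.univ.image φ)).card = q + 1 := by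
          rw [Finset.card_insert_of_notMem hmem,
            Finset.card_image_of_injective _ φ.injective, Finset.card_univ]
        rw [← h1]
        exact Finset.card_le_card hsub
      have hle : f.roots.toFinset.card ≤ q := by
        calc f.roots.toFinset.card ≤ Multiset.card f.roots := f.roots.toFinset_card_le
          _ ≤ f.natDegree := f.card_roots'
          _ = q := hfnat
      omega
  have hξq : ξ ^ q = -(φ c) - ξ := by
    rcases mul_eq_zero.mp hfac with h | h
    · exact absurd (sub_eq_zero.mp h) hnotfix
    · exact sub_eq_zero.mp h
  -- divisibility
  have hdvd : p ∣ (X ^ q + X + C c : F[X]) := by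
    rw [← AdjoinRoot.mk_eq_zero]
    have hmk : AdjoinRoot.mk p (X ^ q + X + C c) = ξ ^ q + ξ + φ c := by
      simp [map_add, map_pow, AdjoinRoot.mk_X, AdjoinRoot.mk_C, hξdef, hφ]
    rw [hmk, hξq]; ring
  obtain ⟨Q, hQ⟩ := hdvd
  -- degree and coefficient facts
  clear_value β c d
  have hNcq : (X ^ q + X + C c : F[X]).coeff q = 1 := by
    rw [coeff_add, coeff_add, coeff_X_pow, coeff_X, coeff_C,
      if_pos rfl, if_neg (show ¬(1 = q) by omega), if_neg (show ¬(q = 0) by omega)]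
    ring
  have hNcq1 : (X ^ q + X + C c : F[X]).coeff (q - 1) = 0 := by
    rw [coeff_add, coeff_add, coeff_X_pow, coeff_X, coeff_C,
      if_neg (show ¬(q - 1 = q) by omega), if_neg (show ¬(1 = q - 1) by omega),
      if_neg (show ¬(q - 1 = 0) by omega)]
    ring
  have hNnat : (X ^ q + X + C c : F[X]).natDegree = q := by
    compute_degree!
    · simp [show ¬(1 = q) by omega, show ¬(q = 0) by omega]
    · omega
  have hN0 : (X ^ q + X + C c : F[X]) ≠ 0 := fun h => by
    rw [h, coeff_zero] at hNcq; exact one_ne_zero hNcq.symm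
  have hQ0 : Q ≠ 0 := by rintro rfl; rw [mul_zero] at hQ; exact hN0 hQ
  have hQnat : Q.natDegree = q - 2 := by
    have h' := natDegree_mul hpmonic.ne_zero hQ0
    rw [← hQ, hNnat, hpnat] at h'
    omega
  have hmul : ∀ n : ℕ, (p * Q).coeff (n + 2)
      = Q.coeff n + c * Q.coeff (n + 1) + d * Q.coeff (n + 2) := by
    intro n
    rw [hpdef, add_mul, add_mul, coeff_add, coeff_add, coeff_X_pow_mul,
      mul_assoc, coeff_C_mul, coeff_C_mul,
      show n + 2 = (n + 1) + 1 from rfl, coeff_X_mul]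
  have hQhigh : ∀ k, m + 2 < k → Q.coeff k = 0 := by
    intro k hk
    exact coeff_eq_zero_of_natDegree_lt (by omega)
  have e1 : Q.coeff (m + 2) = 1 := by
    have h' := congrArg (fun f : F[X] => f.coeff ((m + 2) + 2)) hQ
    rw [hmul (m + 2), hQhigh (m + 3) (by omega), hQhigh (m + 4) (by omega),
      show (m + 2) + 2 = q by omega, hNcq] at h'
    simpa using h'.symm
  have e2 : Q.coeff (m + 1) = -c := by
    have h' := congrArg (fun f : F[X] => f.coeff ((m + 1) + 2)) hQ
    rw [hmul (m + 1), hQhigh (m + 3) (by omega), e1,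
      show (m + 1) + 2 = q - 1 by omega, hNcq1] at h'
    linear_combination -h'
  -- assemble
  refine ⟨p, hpmonic, hirr, hpnat, c * β, 2 * β, ?_, g - C β * Q, ?_, ?_⟩
  · simp only [ne_eq, Prod.mk.injEq, not_and]
    intro _
    exact mul_ne_zero h2 hβ
  · rw [degree_le_iff_coeff_zero]
    intro k hk
    rw [Nat.cast_lt] at hk
    rw [coeff_sub, coeff_C_mul]
    rcases (by omega : k = m + 1 ∨ k = m + 2 ∨ m + 2 < k) with rfl | rfl | hk'
    · rw [e2, show m + 1 = q - 3 by omega, hcdef]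
      field_simp
      ring
    · rw [e1, show m + 2 = q - 2 by omega, ← hβdef]
      ring
    · rw [hQhigh k hk', coeff_eq_zero_of_natDegree_lt (by omega)]
      ring
  · intro x
    have hev : eval x p * eval x Q = 2 * x + c := by
      have h' := congrArg (eval x) hQ
      simp only [eval_add, eval_pow, eval_X, eval_C, eval_mul] at h'
      rw [show x ^ q = x from FiniteField.pow_card x] at h'
      linear_combination -h'
    have hdivv : (c * β + 2 * β * x) / eval x p = β * eval x Q := by
      rw [div_eq_iff (hpne x)]
      linear_combination -β * hev
    rw [eval_sub, eval_mul, eval_C, hdivv]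
    ring
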